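/- Let k₁ ≥ k₂ ≥ 2 and k ≥ 1 be positive integers with n = k₁ + k + k₂, and define f(k₁,k₂) = √2·C(k₁,2)·(k+k₁−1) + √2·C(k,2)·(n−1) + √2·C(k₂,2)·(k+k₂−1) + k·k₁·√((n−1)² + (k+k₁−1)²) + k·k₂·√((n−1)² + (k+k₂−1)²). Then f(k₁+1, k₂−1) > f(k₁, k₂). -/

import Mathlib

open SimpleGraph

noncomputable def somborIndex {V : Type*} [Fintype V] (G : SimpleGraph V) : ℝ :=
  letI := Classical.decEq V
  letI : DecidableRel G.Adj := Classical.decRel _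
  ∑ e ∈ G.edgeFinset,
    Sym2.lift ⟨fun u v => Real.sqrt ((G.degree u : ℝ) ^ 2 + (G.degree v : ℝ) ^ 2),
      fun u v => by dsimp only; rw [add_comm]⟩ e

/-- The Sombor index of the join (K_a ∪ K_b) ∨ K_k, as a function of a and b,
where n is the total number of vertices. -/
noncomputable def fSombor (k n a b : ℕ) : ℝ :=
  Real.sqrt 2 * (a.choose 2 : ℝ) * ((k : ℝ) + a - 1) +
    Real.sqrt 2 * (k.choose 2 : ℝ) * ((n : ℝ) - 1) +
    Real.sqrt 2 * (b.choose 2 : ℝ) * ((k : ℝ) + b - 1) +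
    (k : ℝ) * a * Real.sqrt (((n : ℝ) - 1) ^ 2 + ((k : ℝ) + a - 1) ^ 2) +
    (k : ℝ) * b * Real.sqrt (((n : ℝ) - 1) ^ 2 + ((k : ℝ) + b - 1) ^ 2)

/-- `x ↦ √(c² + (x+d)²)` is convex. -/
lemma sqrtAux_convex (c d : ℝ) :
    ConvexOn ℝ Set.univ (fun x : ℝ => Real.sqrt (c ^ 2 + (x + d) ^ 2)) := by
  refine ⟨convex_univ, fun x _ y _ a b ha hb hab => ?_⟩
  simp only [smul_eq_mul]
  have hx : (0:ℝ) ≤ c ^ 2 + (x + d) ^ 2 := by positivity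
  have hy : (0:ℝ) ≤ c ^ 2 + (y + d) ^ 2 := by positivity
  have key : c ^ 2 + (x + d) * (y + d) ≤
      Real.sqrt (c ^ 2 + (x + d) ^ 2) * Real.sqrt (c ^ 2 + (y + d) ^ 2) := by
    rw [← Real.sqrt_mul hx]
    have h2 : (c ^ 2 + (x + d) * (y + d)) ^ 2 ≤ (c ^ 2 + (x + d) ^ 2) * (c ^ 2 + (y + d) ^ 2) := by
      nlinarith [sq_nonneg (c * (x - y))]
    calc c ^ 2 + (x + d) * (y + d) ≤ |c ^ 2 + (x + d) * (y + d)| := le_abs_self _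
      _ = Real.sqrt ((c ^ 2 + (x + d) * (y + d)) ^ 2) := (Real.sqrt_sq_eq_abs _).symm
      _ ≤ _ := Real.sqrt_le_sqrt h2
  have hRHS : 0 ≤ a * Real.sqrt (c ^ 2 + (x + d) ^ 2) + b * Real.sqrt (c ^ 2 + (y + d) ^ 2) := by
    positivity
  rw [← Real.sqrt_sq hRHS]
  apply Real.sqrt_le_sqrt
  set u := Real.sqrt (c ^ 2 + (x + d) ^ 2) with hu
  set v := Real.sqrt (c ^ 2 + (y + d) ^ 2) with hv
  have e1 : u ^ 2 = c ^ 2 + (x + d) ^ 2 := Real.sq_sqrt hx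
  have e2 : v ^ 2 = c ^ 2 + (y + d) ^ 2 := Real.sq_sqrt hy
  have hab2 : a * b ≥ 0 := mul_nonneg ha hb
  have h3 : a * b * (c ^ 2 + (x + d) * (y + d)) ≤ a * b * (u * v) :=
    mul_le_mul_of_nonneg_left key hab2
  have expand : (a * u + b * v) ^ 2
      = a ^ 2 * u ^ 2 + b ^ 2 * v ^ 2 + 2 * (a * b * (u * v)) := by ring
  rw [expand, e1, e2]
  have hid : c ^ 2 + (a * x + b * y + d) ^ 2
      = a ^ 2 * (c ^ 2 + (x + d) ^ 2) + b ^ 2 * (c ^ 2 + (y + d) ^ 2)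
        + 2 * (a * b * (c ^ 2 + (x + d) * (y + d))) := by
    have hb' : b = 1 - a := by linarith
    subst hb'; ring
  linarith [h3]

/-- `x ↦ x·√(c² + (x+d)²)` is convex on `[0,∞)` when `d ≥ 0`. -/
lemma phi_convex (c d : ℝ) (hd : 0 ≤ d) :
    ConvexOn ℝ (Set.Ici (0:ℝ)) (fun x : ℝ => x * Real.sqrt (c ^ 2 + (x + d) ^ 2)) := by
  have hmono : MonovaryOn (fun x : ℝ => x)
      (fun x : ℝ => Real.sqrt (c ^ 2 + (x + d) ^ 2)) (Set.Ici 0) := by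
    intro i hi j hj hlt
    by_contra h
    push_neg at h
    have : Real.sqrt (c ^ 2 + (j + d) ^ 2) ≤ Real.sqrt (c ^ 2 + (i + d) ^ 2) := by
      apply Real.sqrt_le_sqrt
      have hj0 : (0:ℝ) ≤ j := hj
      nlinarith [hd, hj0, h.le]
    exact absurd hlt (not_lt.2 this)
  have := (convexOn_id (convex_Ici (0:ℝ))).mul
    ((sqrtAux_convex c d).subset (Set.subset_univ _) (convex_Ici 0))
    (fun x hx => hx) (fun x _ => Real.sqrt_nonneg _) hmono
  exact this

lemma incr_mono {f : ℝ → ℝ} (hf : ConvexOn ℝ (Set.Ici (0:ℝ)) f) {p q : ℝ}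
    (hp : 0 ≤ p) (hpq : p + 1 ≤ q) : f (p + 1) - f p ≤ f (q + 1) - f q := by
  have hq : (0:ℝ) ≤ q := by linarith
  have m1 : p ∈ Set.Ici (0:ℝ) := hp
  have m2 : p + 1 ∈ Set.Ici (0:ℝ) := by simp only [Set.mem_Ici]; linarith
  have m3 : q ∈ Set.Ici (0:ℝ) := hq
  have m4 : q + 1 ∈ Set.Ici (0:ℝ) := by simp only [Set.mem_Ici]; linarith
  have s1 : (f (p + 1) - f p) / (p + 1 - p) ≤ (f (q + 1) - f p) / (q + 1 - p) :=
    hf.secant_mono m1 m2 m4 (by intro h; linarith [congrArg id h])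
      (by intro h; nlinarith [congrArg id h]) (by linarith)
  have s2 : (f p - f (q + 1)) / (p - (q + 1)) ≤ (f q - f (q + 1)) / (q - (q + 1)) :=
    hf.secant_mono m4 m1 m3 (by intro h; nlinarith [congrArg id h])
      (by intro h; nlinarith [congrArg id h]) (by linarith)
  have e1 : (f (p + 1) - f p) / (p + 1 - p) = f (p + 1) - f p := by
    rw [show p + 1 - p = 1 by ring, div_one]
  have e2 : (f q - f (q + 1)) / (q - (q + 1)) = f (q + 1) - f q := by
    rw [show q - (q + 1) = -1 by ring]; field_simp; ring
  have e3 : (f p - f (q + 1)) / (p - (q + 1)) = (f (q + 1) - f p) / (q + 1 - p) := by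
    rw [show p - (q + 1) = -(q + 1 - p) by ring, div_neg]
    rw [show -((f p - f (q + 1)) / (q + 1 - p)) = (-(f p - f (q + 1))) / (q + 1 - p) by ring]
    ring_nf
  rw [e1] at s1
  rw [e2, e3] at s2
  linarith

theorem fSombor_mono (k k₁ k₂ n : ℕ) (hk : 1 ≤ k) (hk₂ : 2 ≤ k₂) (h12 : k₂ ≤ k₁)
    (hn : n = k₁ + k + k₂) :
    fSombor k n (k₁ + 1) (k₂ - 1) > fSombor k n k₁ k₂ := by
  have hK1 : (1:ℝ) ≤ (k:ℝ) := by exact_mod_cast hk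
  have hB2 : (2:ℝ) ≤ (k₂:ℝ) := by exact_mod_cast hk₂
  have hAB : (k₂:ℝ) ≤ (k₁:ℝ) := by exact_mod_cast h12
  have hb1 : ((k₂ - 1 : ℕ) : ℝ) = (k₂:ℝ) - 1 := by
    have : 1 ≤ k₂ := by omega
    push_cast [this]; ring
  set K := (k:ℝ) with hKdef
  set A := (k₁:ℝ) with hAdef
  set B := (k₂:ℝ) with hBdef
  set Nn := ((n:ℝ) - 1) with hNdef
  -- the convexity increment inequality
  have hd : (0:ℝ) ≤ K - 1 := by linarith
  have hφ := incr_mono (phi_convex Nn (K - 1) hd)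
    (p := B - 1) (q := A) (by linarith) (by linarith)
  rw [show B - 1 + 1 = B by ring] at hφ
  -- unfold fSombor and normalize casts
  rw [fSombor, fSombor]
  simp only [Nat.cast_choose_two, Nat.cast_add, Nat.cast_one, hb1]
  rw [show K + (A + 1) - 1 = A + 1 + (K - 1) by ring,
      show K + (B - 1) - 1 = B - 1 + (K - 1) by ring,
      show K + A - 1 = A + (K - 1) by ring,
      show K + B - 1 = B + (K - 1) by ring]
  set s1 := Real.sqrt (Nn ^ 2 + (B - 1 + (K - 1)) ^ 2) with hs1
  set s2 := Real.sqrt (Nn ^ 2 + (B + (K - 1)) ^ 2) with hs2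
  set s3 := Real.sqrt (Nn ^ 2 + (A + (K - 1)) ^ 2) with hs3
  set s4 := Real.sqrt (Nn ^ 2 + (A + 1 + (K - 1)) ^ 2) with hs4
  -- multiply the increment inequality by K ≥ 0
  have hφK : K * (B * s2 - (B - 1) * s1) ≤ K * ((A + 1) * s4 - A * s3) :=
    mul_le_mul_of_nonneg_left hφ (by linarith)
  -- strict positivity of the √2 part
  have hstpos : (0:ℝ) < A * (2 * K + 3 * A - 1) - (B - 1) * (2 * K + 3 * B - 4) := by
    nlinarith [mul_nonneg (sub_nonneg.2 hAB) (by linarith : (0:ℝ) ≤ 2 * K + 3 * B - 1)]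
  have hsqrt2 : (0:ℝ) < Real.sqrt 2 := by positivity
  have hst : 0 < Real.sqrt 2 * (A * (2 * K + 3 * A - 1) - (B - 1) * (2 * K + 3 * B - 4)) :=
    mul_pos hsqrt2 hstpos
  nlinarith [hφK, hst]
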